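/- Let f be monotone, nonnegative and submodular on a finite set C with multilinear extension F. Then for every x ∈ [0,1]^C and every nonnegative direction d ∈ ℝ_{≥0}^C, the function λ ↦ F(x + λ d) (defined for λ keeping x + λd in [0,1]^C) is concave in λ. -/

import Mathlib

open Finset

/-- The multilinear extension of a set function. -/
noncomputable def multilinearExt {C : Type*} [Fintype C] [DecidableEq C]
    (f : Finset C → ℝ) (x : C → ℝ) : ℝ :=
  ∑ T ∈ (Finset.univ : Finset C).powerset,
    f T * ((∏ j ∈ T, x j) * ∏ j ∈ Tᶜ, (1 - x j))

namespace MLEAux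

variable {C : Type*} [Fintype C] [DecidableEq C]

/-- The factor associated to coordinate `j` in the term of `T`. -/
def A (x d : C → ℝ) (T : Finset C) (j : C) (l : ℝ) : ℝ :=
  if j ∈ T then x j + l * d j else 1 - (x j + l * d j)

/-- Derivative of `A` in `l`. -/
def E (d : C → ℝ) (T : Finset C) (j : C) : ℝ :=
  if j ∈ T then d j else -d j

lemma hasDerivAt_A (x d : C → ℝ) (T : Finset C) (j : C) (l : ℝ) :
    HasDerivAt (A x d T j) (E d T j) l := by
  unfold A E
  by_cases h : j ∈ T
  · simp only [if_pos h]
    exact (hasDerivAt_mul_const (d j)).const_add (x j)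
  · simp only [if_neg h]
    exact ((hasDerivAt_mul_const (d j)).const_add (x j)).const_sub 1

lemma mlExt_eq (f : Finset C → ℝ) (x d : C → ℝ) (l : ℝ) :
    multilinearExt f (fun j => x j + l * d j)
      = ∑ T ∈ (univ : Finset C).powerset, f T * ∏ j, A x d T j l := by
  simp only [multilinearExt]
  refine Finset.sum_congr rfl fun T _ => ?_
  congr 1
  rw [← Finset.prod_mul_prod_compl T (fun j => A x d T j l)]
  congr 1
  · exact Finset.prod_congr rfl fun j hj => by simp [A, hj]
  · exact Finset.prod_congr rfl fun j hj => by simp [A, (Finset.mem_compl.mp hj)]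

/-- First derivative of `l ↦ F(x + l d)`. -/
noncomputable def g1 (f : Finset C → ℝ) (x d : C → ℝ) (l : ℝ) : ℝ :=
  ∑ T ∈ (univ : Finset C).powerset, f T *
    ∑ j, (∏ i ∈ univ.erase j, A x d T i l) * E d T j

/-- Second derivative of `l ↦ F(x + l d)`. -/
noncomputable def g2 (f : Finset C → ℝ) (x d : C → ℝ) (l : ℝ) : ℝ :=
  ∑ T ∈ (univ : Finset C).powerset, f T *
    ∑ j, (∑ i ∈ univ.erase j,
      (∏ k ∈ (univ.erase j).erase i, A x d T k l) * E d T i) * E d T j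

lemma hasDerivAt_g (f : Finset C → ℝ) (x d : C → ℝ) (l : ℝ) :
    HasDerivAt (fun l => ∑ T ∈ (univ : Finset C).powerset, f T * ∏ j, A x d T j l)
      (g1 f x d l) l := by
  unfold g1
  apply HasDerivAt.fun_sum
  intro T _
  have h := HasDerivAt.fun_finsetProd (fun i (_ : i ∈ (univ : Finset C)) => hasDerivAt_A x d T i l)
  simpa [smul_eq_mul, mul_comm] using h.const_mul (f T)

lemma hasDerivAt_g1 (f : Finset C → ℝ) (x d : C → ℝ) (l : ℝ) :
    HasDerivAt (g1 f x d) (g2 f x d l) l := by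
  unfold g1 g2
  apply HasDerivAt.fun_sum
  intro T _
  refine HasDerivAt.const_mul _ (HasDerivAt.fun_sum fun j _ => ?_)
  have h := HasDerivAt.fun_finsetProd
    (fun i (_ : i ∈ (univ : Finset C).erase j) => hasDerivAt_A x d T i l)
  simpa [smul_eq_mul] using h.mul_const (E d T j)

lemma g2_nonpos (f : Finset C → ℝ)
    (hsub : ∀ (S T : Finset C) (t : C), S ⊆ T → t ∉ T →
      f (S ∪ {t}) - f S ≥ f (T ∪ {t}) - f T)
    (x d : C → ℝ) (hd : ∀ j, 0 ≤ d j) (l : ℝ)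
    (hl : ∀ j, x j + l * d j ∈ Set.Icc (0:ℝ) 1) :
    g2 f x d l ≤ 0 := by
  have hA : ∀ (T : Finset C) (j : C), 0 ≤ A x d T j l := by
    intro T j
    unfold A
    split
    · exact (hl j).1
    · have := (hl j).2; linarith
  have hu : ∀ (s : Finset C) (a : C), s ∪ {a} = insert a s := fun s a => by
    rw [Finset.union_comm, ← Finset.insert_eq]
  -- rearrange the sum
  have hrw : g2 f x d l = ∑ j, ∑ i ∈ univ.erase j, ∑ T ∈ (univ : Finset C).powerset,
      f T * ((∏ k ∈ (univ.erase j).erase i, A x d T k l) * (E d T i * E d T j)) := by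
    unfold g2
    have step1 : (∑ T ∈ (univ : Finset C).powerset, f T *
          ∑ j, (∑ i ∈ univ.erase j,
            (∏ k ∈ (univ.erase j).erase i, A x d T k l) * E d T i) * E d T j)
        = ∑ T ∈ (univ : Finset C).powerset, ∑ j, ∑ i ∈ univ.erase j,
            f T * ((∏ k ∈ (univ.erase j).erase i, A x d T k l) * (E d T i * E d T j)) := by
      refine Finset.sum_congr rfl fun T _ => ?_
      rw [Finset.mul_sum]
      refine Finset.sum_congr rfl fun j _ => ?_
      rw [Finset.sum_mul, Finset.mul_sum]
      exact Finset.sum_congr rfl fun i _ => by ring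
    rw [step1, Finset.sum_comm]
    exact Finset.sum_congr rfl fun j _ => Finset.sum_comm
  rw [hrw]
  apply Finset.sum_nonpos
  intro j _
  apply Finset.sum_nonpos
  intro i hi
  -- key pairwise estimate
  have hij : i ≠ j := (Finset.mem_erase.mp hi).1
  set R : Finset C := (univ.erase j).erase i with hR
  have hiR : i ∉ R := Finset.notMem_erase i _
  have h1 : insert i R = univ.erase j := Finset.insert_erase hi
  have hjR' : j ∉ insert i R := by rw [h1]; exact Finset.notMem_erase j _
  have h2 : insert j (insert i R) = univ := by rw [h1]; exact Finset.insert_erase (mem_univ j)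
  rw [← h2, Finset.sum_powerset_insert hjR', Finset.sum_powerset_insert hiR,
    Finset.sum_powerset_insert hiR, ← Finset.sum_add_distrib, ← Finset.sum_add_distrib,
    ← Finset.sum_add_distrib]
  apply Finset.sum_nonpos
  intro S hS
  have hSR : S ⊆ R := Finset.mem_powerset.mp hS
  have hiS : i ∉ S := fun h => hiR (hSR h)
  have hjS : j ∉ S := fun h => Finset.notMem_erase j univ (Finset.erase_subset i _ (hSR h))
  have hjiS : j ∉ insert i S := by
    simp only [Finset.mem_insert]
    rintro (h | h)
    · exact hij h.symm
    · exact hjS h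
  -- products coincide
  have hAcong : ∀ T : Finset C, (∀ k ∈ R, (k ∈ T ↔ k ∈ S)) →
      (∏ k ∈ R, A x d T k l) = ∏ k ∈ R, A x d S k l := by
    intro T h
    refine Finset.prod_congr rfl fun k hk => ?_
    unfold A
    by_cases hks : k ∈ S
    · rw [if_pos ((h k hk).mpr hks), if_pos hks]
    · rw [if_neg (fun c => hks ((h k hk).mp c)), if_neg hks]
  have hkR : ∀ k ∈ R, k ≠ i ∧ k ≠ j := by
    intro k hk
    rw [hR] at hk
    exact ⟨(Finset.mem_erase.mp hk).1, (Finset.mem_erase.mp (Finset.mem_of_mem_erase hk)).1⟩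
  have hP1 : (∏ k ∈ R, A x d (insert i S) k l) = ∏ k ∈ R, A x d S k l :=
    hAcong _ fun k hk => by simp [Finset.mem_insert, (hkR k hk).1]
  have hP2 : (∏ k ∈ R, A x d (insert j S) k l) = ∏ k ∈ R, A x d S k l :=
    hAcong _ fun k hk => by simp [Finset.mem_insert, (hkR k hk).2]
  have hP3 : (∏ k ∈ R, A x d (insert j (insert i S)) k l) = ∏ k ∈ R, A x d S k l :=
    hAcong _ fun k hk => by simp [Finset.mem_insert, (hkR k hk).1, (hkR k hk).2]
  rw [hP1, hP2, hP3]
  -- E values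
  have hEi1 : E d S i = -d i := if_neg hiS
  have hEj1 : E d S j = -d j := if_neg hjS
  have hEi2 : E d (insert i S) i = d i := if_pos (Finset.mem_insert_self i S)
  have hEj2 : E d (insert i S) j = -d j := if_neg hjiS
  have hEi3 : E d (insert j S) i = -d i := by
    refine if_neg ?_
    simp only [Finset.mem_insert]
    rintro (h | h)
    · exact hij h
    · exact hiS h
  have hEj3 : E d (insert j S) j = d j := if_pos (Finset.mem_insert_self j S)
  have hEi4 : E d (insert j (insert i S)) i = d i :=
    if_pos (Finset.mem_insert_of_mem (Finset.mem_insert_self i S))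
  have hEj4 : E d (insert j (insert i S)) j = d j := if_pos (Finset.mem_insert_self j _)
  rw [hEi1, hEj1, hEi2, hEj2, hEi3, hEj3, hEi4, hEj4]
  -- submodularity
  have hsub' := hsub S (insert i S) j (Finset.subset_insert i S) hjiS
  rw [hu S j, hu (insert i S) j] at hsub'
  have hw : 0 ≤ ∏ k ∈ R, A x d S k l := Finset.prod_nonneg fun k _ => hA S k
  have hdd : 0 ≤ d i * d j := mul_nonneg (hd i) (hd j)
  have heq : f S * ((∏ k ∈ R, A x d S k l) * (-d i * -d j)) +
      f (insert i S) * ((∏ k ∈ R, A x d S k l) * (d i * -d j)) +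
      (f (insert j S) * ((∏ k ∈ R, A x d S k l) * (-d i * d j)) +
        f (insert j (insert i S)) * ((∏ k ∈ R, A x d S k l) * (d i * d j))) =
      ((∏ k ∈ R, A x d S k l) * (d i * d j)) *
        (f S - f (insert i S) - f (insert j S) + f (insert j (insert i S))) := by ring
  rw [heq]
  exact mul_nonpos_of_nonneg_of_nonpos (mul_nonneg hw hdd) (by linarith)

end MLEAux

open MLEAux in
/-- Concavity of the multilinear extension of a monotone, nonnegative, submodular
function along nonnegative directions. -/
theorem multilinearExt_concave_positive_directions {C : Type*} [Fintype C] [DecidableEq C]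
    (f : Finset C → ℝ)
    (hmono : ∀ S T : Finset C, S ⊆ T → f S ≤ f T)
    (hnonneg : ∀ S : Finset C, 0 ≤ f S)
    (hsub : ∀ (S T : Finset C) (t : C), S ⊆ T → t ∉ T →
      f (S ∪ {t}) - f S ≥ f (T ∪ {t}) - f T)
    (x : C → ℝ) (hx : ∀ j, x j ∈ Set.Icc (0:ℝ) 1)
    (d : C → ℝ) (hd : ∀ j, 0 ≤ d j) :
    ConcaveOn ℝ {l : ℝ | ∀ j, x j + l * d j ∈ Set.Icc (0:ℝ) 1}
      (fun l => multilinearExt f (fun j => x j + l * d j)) := by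
  set D : Set ℝ := {l : ℝ | ∀ j, x j + l * d j ∈ Set.Icc (0:ℝ) 1} with hD
  have hfeq : (fun l => multilinearExt f (fun j => x j + l * d j)) =
      fun l => ∑ T ∈ (univ : Finset C).powerset, f T * ∏ j, A x d T j l :=
    funext fun l => mlExt_eq f x d l
  rw [hfeq]
  have hDconv : Convex ℝ D := by
    intro l1 h1 l2 h2 a b ha hb hab
    intro j
    have hmem := (convex_Icc (0:ℝ) 1) (h1 j) (h2 j) ha hb hab
    simp only [smul_eq_mul] at hmem ⊢
    have hb' : b = 1 - a := by linarith
    subst hb'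
    convert hmem using 1
    ring
  refine concaveOn_of_hasDerivWithinAt2_nonpos hDconv
    (fun l _ => (hasDerivAt_g f x d l).continuousAt.continuousWithinAt)
    (fun l _ => (hasDerivAt_g f x d l).hasDerivWithinAt)
    (fun l _ => (hasDerivAt_g1 f x d l).hasDerivWithinAt)
    (fun l hl => g2_nonpos f hsub x d hd l (interior_subset hl))
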